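/- Let 1 ≤ p, q ≤ ∞, k ≥ 1 and σ_1, …, σ_k > 0. Then for all ε > 0 the diagonal operator D_σ : ℓ_p^k → ℓ_q^k satisfies N(2ε, D_σ) ≤ 2^k · ( λ^k(B_{ℓ_p^k}) / λ^k(B_{ℓ_q^k}) ) · ∏_{i=1}^k ( ‖id : ℓ_q^k → ℓ_p^k‖ + σ_i/ε ), where ‖id : ℓ_q^k → ℓ_p^k‖ denotes the operator norm of the identity map from ℓ_q^k to ℓ_p^k and λ^k denotes the k-dimensional Lebesgue measure. -/

import Mathlib

open Metric MeasureTheory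
open scoped ENNReal

/-- The covering number of a set `T` at scale `ε`: the least number `m ≥ 1` of closed
balls of radius `ε` needed to cover `T` (`∞` if no finite cover exists). -/
noncomputable def coveringNumber {Y : Type*} [SeminormedAddCommGroup Y]
    (ε : ℝ) (T : Set Y) : ℝ≥0∞ :=
  sInf {c : ℝ≥0∞ | ∃ m : ℕ, c = m ∧ 1 ≤ m ∧
    ∃ y : Fin m → Y, T ⊆ ⋃ i, Metric.closedBall (y i) ε}

/-- The `k`-dimensional Lebesgue volume of the closed unit ball of `ℓ_p^k = PiLp p ℝ^k`
(computed in the underlying space `Fin k → ℝ`). -/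
noncomputable def ballVolume (p : ℝ≥0∞) [Fact (1 ≤ p)] (k : ℕ) : ℝ≥0∞ :=
  volume ((WithLp.equiv p (∀ _ : Fin k, ℝ)) ''
    Metric.closedBall (0 : PiLp p (fun _ : Fin k => ℝ)) 1)

open scoped Pointwise

set_option maxHeartbeats 1000000

lemma pilp_norm_mono {κ : Type*} [Fintype κ] (p : ℝ≥0∞) [Fact (1 ≤ p)]
    (u v : PiLp p (fun _ : κ => ℝ)) (h : ∀ i, |u i| ≤ |v i|) : ‖u‖ ≤ ‖v‖ := by
  rcases eq_or_ne p ∞ with hp | hp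
  · subst hp
    rw [PiLp.norm_eq_ciSup, PiLp.norm_eq_ciSup]
    exact ciSup_mono (Set.Finite.bddAbove (Set.finite_range _))
      fun i => by simpa [Real.norm_eq_abs] using h i
  · have hp0 : 0 < p.toReal :=
      ENNReal.toReal_pos (by intro h0; exact absurd (h0 ▸ (Fact.out : 1 ≤ p)) (by simp)) hp
    rw [PiLp.norm_eq_sum hp0, PiLp.norm_eq_sum hp0]
    apply Real.rpow_le_rpow (Finset.sum_nonneg fun i _ => Real.rpow_nonneg (norm_nonneg _) _)
      (Finset.sum_le_sum fun i _ => by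
        simp only [Real.norm_eq_abs]
        exact Real.rpow_le_rpow (abs_nonneg _) (h i) hp0.le)
      (by positivity)

lemma image_vadd_smul {E F : Type*} [AddCommGroup E] [AddCommGroup F] [Module ℝ E] [Module ℝ F]
    (f : E →ₗ[ℝ] F) (a : E) (r : ℝ) (s : Set E) :
    f '' (a +ᵥ r • s) = f a +ᵥ r • (f '' s) := by
  rw [← Set.image_smul, ← Set.image_vadd, Set.image_image, Set.image_image,
    ← Set.image_smul, ← Set.image_vadd, Set.image_image, Set.image_image]
  refine Set.image_congr' fun x => ?_
  simp [map_add, _root_.map_smul, vadd_eq_add]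

lemma packing_bound (p q : ℝ≥0∞) [Fact (1 ≤ p)] [Fact (1 ≤ q)]
    (k : ℕ) (σ : Fin k → ℝ) (hσ : ∀ i, 0 < σ i)
    (I : PiLp q (fun _ : Fin k => ℝ) →L[ℝ] PiLp p (fun _ : Fin k => ℝ))
    (hI : ∀ x i, I x i = x i) (hIpos : 0 < ‖I‖)
    (ε : ℝ) (hε : 0 < ε) (n : ℕ) (y : Fin n → PiLp q (fun _ : Fin k => ℝ))
    (hyS : ∀ j, ∃ x : PiLp p (fun _ : Fin k => ℝ), ‖x‖ ≤ 1 ∧ ∀ i, y j i = σ i * x i)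
    (hsep : Pairwise fun a b => 2 * ε < dist (y a) (y b)) :
    (n : ℝ≥0∞) * (ENNReal.ofReal (ε ^ k) * ballVolume q k) ≤
      2 ^ k * ENNReal.ofReal (∏ i, (σ i + ε * ‖I‖)) * ballVolume p k := by
  classical
  let Ep := PiLp p (fun _ : Fin k => ℝ)
  let Eq' := PiLp q (fun _ : Fin k => ℝ)
  let eP : Ep ≃L[ℝ] (Fin k → ℝ) := (WithLp.linearEquiv p ℝ (Fin k → ℝ)).toContinuousLinearEquiv
  let eQ : Eq' ≃L[ℝ] (Fin k → ℝ) := (WithLp.linearEquiv q ℝ (Fin k → ℝ)).toContinuousLinearEquiv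
  set c : Fin k → ℝ := fun i => σ i + ε * ‖I‖ with hc_def
  have hc : ∀ i, 0 < c i := fun i => by
    have := hσ i; have : 0 < ε * ‖I‖ := by positivity
    simp only [hc_def]; positivity
  set Dc : (Fin k → ℝ) →ₗ[ℝ] (Fin k → ℝ) := Matrix.toLin' (Matrix.diagonal c) with hDc_def
  have hDc_apply : ∀ (v : Fin k → ℝ) i, Dc v i = c i * v i := fun v i => by
    simp [hDc_def, Matrix.toLin'_apply, Matrix.mulVec_diagonal]
  set T : Set (Fin k → ℝ) := Dc '' (eP '' closedBall (0 : Ep) 1) with hT_def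
  set A : Fin n → Set (Fin k → ℝ) := fun j => eQ '' closedBall (y j) ε with hA_def
  -- measurability
  have hAm : ∀ j, MeasurableSet (A j) := fun j =>
    (((isCompact_closedBall (y j) ε).image eQ.continuous).isClosed).measurableSet
  -- disjointness
  have hAd : Pairwise (Function.onFun Disjoint A) := by
    intro a b hab
    refine (Set.disjoint_image_iff eQ.injective).2 (closedBall_disjoint_closedBall ?_)
    calc ε + ε = 2 * ε := by ring
    _ < dist (y a) (y b) := hsep hab
  -- volume of each A j
  have hAvol : ∀ j, volume (A j) = ENNReal.ofReal (ε ^ k) * ballVolume q k := by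
    intro j
    have h1 : closedBall (y j) ε = y j +ᵥ (ε • closedBall (0 : Eq') 1) := by
      rw [smul_unitClosedBall_of_nonneg hε.le, Metric.vadd_closedBall, vadd_eq_add, add_zero]
    have h2 : A j = eQ (y j) +ᵥ ε • (eQ '' closedBall (0 : Eq') 1) := by
      rw [hA_def]
      show (eQ.toLinearEquiv.toLinearMap) '' closedBall (y j) ε = _
      rw [h1, image_vadd_smul]; rfl
    have h3 : (eQ '' closedBall (0 : Eq') 1 : Set (Fin k → ℝ))
        = (WithLp.equiv q (∀ _ : Fin k, ℝ)) '' closedBall (0 : Eq') 1 := rfl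
    rw [h2, measure_vadd, Measure.addHaar_smul, h3]
    have hfr : Module.finrank ℝ (Fin k → ℝ) = k := Module.finrank_fin_fun ℝ
    rw [hfr, abs_of_pos (pow_pos hε k)]
    rfl
  -- inclusion into 2 • T
  have hsub : ∀ j, A j ⊆ (2 : ℝ) • T := by
    intro j v hv
    obtain ⟨z, hz, rfl⟩ := hv
    obtain ⟨x, hx1, hx2⟩ := hyS j
    set u : Eq' := z - y j with hu_def
    have hu : ‖u‖ ≤ ε := by
      rw [hu_def]; rw [mem_closedBall, dist_eq_norm] at hz; exact hz
    -- the preimage point w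
    set w1 : Ep := (WithLp.equiv p (∀ _ : Fin k, ℝ)).symm (fun i => σ i * x i / (2 * c i)) with hw1
    set w2 : Ep := (WithLp.equiv p (∀ _ : Fin k, ℝ)).symm (fun i => u i / (2 * c i)) with hw2
    have hw1c : ∀ i, w1 i = σ i * x i / (2 * c i) := fun i => rfl
    have hw2c : ∀ i, u i / (2 * c i) = w2 i := fun i => rfl
    have hw1n : ‖w1‖ ≤ 1 / 2 := by
      have : ‖w1‖ ≤ ‖(1 / 2 : ℝ) • x‖ := by
        apply pilp_norm_mono
        intro i
        rw [hw1c]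
        have hci := hc i
        have hσi := hσ i
        have hrhs : ((1 / 2 : ℝ) • x) i = 1 / 2 * x i := rfl
        have hlhs : |σ i * x i / (2 * c i)| = σ i * |x i| / (2 * c i) := by
          rw [abs_div, abs_mul, abs_of_pos hσi, abs_of_pos (show (0:ℝ) < 2 * c i by positivity)]
        rw [hrhs, hlhs, abs_mul, abs_of_pos (show (0:ℝ) < 1/2 by norm_num),
          div_le_iff₀ (show (0:ℝ) < 2 * c i by positivity)]
        have hle : σ i ≤ c i := by
          simp only [hc_def]; nlinarith [hε, hIpos]
        calc σ i * |x i| ≤ c i * |x i| := mul_le_mul_of_nonneg_right hle (abs_nonneg (x i))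
          _ = 1 / 2 * |x i| * (2 * c i) := by ring
      calc ‖w1‖ ≤ ‖(1 / 2 : ℝ) • x‖ := this
        _ = (1 / 2 : ℝ) * ‖x‖ := by rw [norm_smul]; simp
        _ ≤ 1 / 2 := by nlinarith [hx1]
    have hIu : ‖I u‖ ≤ ‖I‖ * ε := by
      calc ‖I u‖ ≤ ‖I‖ * ‖u‖ := I.le_opNorm u
        _ ≤ ‖I‖ * ε := by nlinarith [hIpos]
    have hw2n : ‖w2‖ ≤ 1 / 2 := by
      have key : ‖w2‖ ≤ ‖(2 * ε * ‖I‖)⁻¹ • (I u)‖ := by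
        apply pilp_norm_mono
        intro i
        rw [← hw2c, PiLp.smul_apply, smul_eq_mul, abs_mul, hI u i]
        rw [abs_div]
        have h2c : |(2 : ℝ) * c i| = 2 * c i := abs_of_pos (by have := hc i; positivity)
        rw [h2c, div_le_iff₀ (by have := hc i; positivity)]
        have hinv : |(2 * ε * ‖I‖)⁻¹| = (2 * ε * ‖I‖)⁻¹ := abs_of_pos (by positivity)
        rw [hinv]
        have hec : ε * ‖I‖ ≤ c i := by simp only [hc_def]; nlinarith [hσ i]
        rw [inv_mul_eq_div, div_mul_eq_mul_div, le_div_iff₀ (by positivity)]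
        calc |u i| * (2 * ε * ‖I‖) ≤ |u i| * (2 * c i) := by
              nlinarith [abs_nonneg (u i), hc i]
          _ = |u i| * (2 * c i) := rfl
      calc ‖w2‖ ≤ ‖(2 * ε * ‖I‖)⁻¹ • (I u)‖ := key
        _ = (2 * ε * ‖I‖)⁻¹ * ‖I u‖ := by
            rw [norm_smul, Real.norm_eq_abs, abs_of_pos (by positivity)]
        _ ≤ (2 * ε * ‖I‖)⁻¹ * (‖I‖ * ε) := by
            have : (0:ℝ) < (2 * ε * ‖I‖)⁻¹ := by positivity
            nlinarith [hIu, norm_nonneg (I u)]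
        _ = 1 / 2 := by field_simp
    have hwn : ‖w1 + w2‖ ≤ 1 := by
      calc ‖w1 + w2‖ ≤ ‖w1‖ + ‖w2‖ := norm_add_le _ _
        _ ≤ 1 / 2 + 1 / 2 := add_le_add hw1n hw2n
        _ = 1 := by norm_num
    refine Set.mem_smul_set.2 ⟨Dc (eP (w1 + w2)), ⟨eP (w1 + w2), ⟨w1 + w2, ?_, rfl⟩, rfl⟩, ?_⟩
    · rwa [mem_closedBall, dist_zero_right]
    · funext i
      have : eP (w1 + w2) i = w1 i + w2 i := rfl
      rw [Pi.smul_apply, hDc_apply, this, hw1c, ← hw2c]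
      have heq : (eQ z : Fin k → ℝ) i = z i := rfl
      rw [heq]
      have hz_eq : z i = σ i * x i + u i := by
        rw [hu_def]
        have : (z - y j) i = z i - y j i := rfl
        rw [this, hx2 i]; ring
      rw [hz_eq]
      have := hc i
      field_simp
      ring
  -- assemble
  have hUnion : volume (⋃ j, A j) = (n : ℝ≥0∞) * (ENNReal.ofReal (ε ^ k) * ballVolume q k) := by
    rw [measure_iUnion hAd hAm, tsum_fintype]
    simp [hAvol, Finset.sum_const, Finset.card_univ, nsmul_eq_mul]
  have hTvol : volume ((2 : ℝ) • T) = 2 ^ k * ENNReal.ofReal (∏ i, c i) * ballVolume p k := by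
    rw [Measure.addHaar_smul, hT_def, Measure.addHaar_image_linearMap]
    have hdet : LinearMap.det Dc = ∏ i, c i := by
      rw [hDc_def, LinearMap.det_toLin', Matrix.det_diagonal]
    have h3 : (eP '' closedBall (0 : Ep) 1 : Set (Fin k → ℝ))
        = (WithLp.equiv p (∀ _ : Fin k, ℝ)) '' closedBall (0 : Ep) 1 := rfl
    rw [hdet, h3]
    have hfr : Module.finrank ℝ (Fin k → ℝ) = k := Module.finrank_fin_fun ℝ
    rw [hfr]
    have habs : |(2:ℝ) ^ k| = (2:ℝ) ^ k := abs_of_pos (by positivity)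
    have habsprod : |∏ i, c i| = ∏ i, c i :=
      abs_of_pos (Finset.prod_pos fun i _ => hc i)
    rw [habs, habsprod]
    rw [show ((2:ℝ≥0∞) ^ k) = ENNReal.ofReal ((2:ℝ) ^ k) by
      rw [ENNReal.ofReal_pow (by norm_num)]; norm_num]
    rw [← mul_assoc]
    rfl
  calc (n : ℝ≥0∞) * (ENNReal.ofReal (ε ^ k) * ballVolume q k) = volume (⋃ j, A j) := hUnion.symm
    _ ≤ volume ((2 : ℝ) • T) := measure_mono (Set.iUnion_subset hsub)
    _ = 2 ^ k * ENNReal.ofReal (∏ i, c i) * ballVolume p k := hTvol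

/-- **Lemma 2.2 (volume argument).**
Let `1 ≤ p, q ≤ ∞`, `k ≥ 1` and `σ_1, …, σ_k > 0`.  Then for all `ε > 0` the diagonal
operator `D_σ : ℓ_p^k → ℓ_q^k` satisfies
`N(2ε, D_σ) ≤ 2^k (λ^k(B_{ℓ_p^k}) / λ^k(B_{ℓ_q^k})) ∏_{i=1}^k (‖id : ℓ_q^k → ℓ_p^k‖ + σ_i/ε)`,
where the image of the unit ball under `D_σ` is described explicitly as a set and the
identity map `id : ℓ_q^k → ℓ_p^k` is given as a continuous linear map `I`. -/
theorem statement6 (p q : ℝ≥0∞) [Fact (1 ≤ p)] [Fact (1 ≤ q)]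
    (k : ℕ) (hk : 1 ≤ k) (σ : Fin k → ℝ) (hσ : ∀ i, 0 < σ i)
    (I : PiLp q (fun _ : Fin k => ℝ) →L[ℝ] PiLp p (fun _ : Fin k => ℝ))
    (hI : ∀ (x : PiLp q (fun _ : Fin k => ℝ)) (i : Fin k), I x i = x i)
    (ε : ℝ) (hε : 0 < ε) :
    coveringNumber (2 * ε)
        {y : PiLp q (fun _ : Fin k => ℝ) |
          ∃ x : PiLp p (fun _ : Fin k => ℝ), ‖x‖ ≤ 1 ∧ ∀ i, y i = σ i * x i} ≤
      2 ^ k * (ballVolume p k / ballVolume q k) *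
        ENNReal.ofReal (∏ i : Fin k, (‖I‖ + σ i / ε)) := by
  classical
  set S := {y : PiLp q (fun _ : Fin k => ℝ) |
      ∃ x : PiLp p (fun _ : Fin k => ℝ), ‖x‖ ≤ 1 ∧ ∀ i, y i = σ i * x i} with hS_def
  let eQ : PiLp q (fun _ : Fin k => ℝ) ≃L[ℝ] (Fin k → ℝ) :=
    (WithLp.linearEquiv q ℝ (Fin k → ℝ)).toContinuousLinearEquiv
  let eP : PiLp p (fun _ : Fin k => ℝ) ≃L[ℝ] (Fin k → ℝ) :=
    (WithLp.linearEquiv p ℝ (Fin k → ℝ)).toContinuousLinearEquiv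
  -- the operator norm of I is positive
  have hIpos : 0 < ‖I‖ := by
    have hIne : I ≠ 0 := by
      intro h0
      set i0 : Fin k := ⟨0, hk⟩
      set x0 : PiLp q (fun _ : Fin k => ℝ) :=
        (WithLp.equiv q (∀ _ : Fin k, ℝ)).symm (Pi.single i0 1) with hx0
      have h1 : I x0 i0 = 1 := by
        rw [hI]
        simp [hx0, PiLp.toLp_apply]
      rw [h0] at h1
      simp at h1
    rcases (norm_nonneg I).eq_or_lt with h | h
    · exact absurd ((ContinuousLinearMap.opNorm_zero_iff I).mp h.symm) hIne
    · exact h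
  -- volume facts
  have hVq_rfl : ballVolume q k
      = volume (eQ '' closedBall (0 : PiLp q (fun _ : Fin k => ℝ)) 1) := rfl
  have hVp_rfl : ballVolume p k
      = volume (eP '' closedBall (0 : PiLp p (fun _ : Fin k => ℝ)) 1) := rfl
  have hVq_pos : 0 < ballVolume q k := by
    rw [hVq_rfl]
    have hne : (eQ '' (ball (0 : PiLp q (fun _ : Fin k => ℝ)) 1)).Nonempty :=
      ⟨eQ 0, ⟨0, mem_ball_self one_pos, rfl⟩⟩
    have hopen : IsOpen (eQ '' (ball (0 : PiLp q (fun _ : Fin k => ℝ)) 1)) :=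
      eQ.toHomeomorph.isOpenMap _ isOpen_ball
    calc (0:ℝ≥0∞) < volume (eQ '' (ball (0 : PiLp q (fun _ : Fin k => ℝ)) 1)) :=
          hopen.measure_pos volume hne
      _ ≤ _ := measure_mono (Set.image_mono ball_subset_closedBall)
  have hVq_ne_top : ballVolume q k ≠ ∞ := by
    rw [hVq_rfl]
    exact (((isCompact_closedBall _ _).image eQ.continuous).measure_lt_top).ne
  have hVp_ne_top : ballVolume p k ≠ ∞ := by
    rw [hVp_rfl]
    exact (((isCompact_closedBall _ _).image eP.continuous).measure_lt_top).ne
  -- abbreviations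
  set a : ℝ≥0∞ := ENNReal.ofReal (ε ^ k) * ballVolume q k with ha_def
  set C : ℝ≥0∞ := 2 ^ k * ENNReal.ofReal (∏ i : Fin k, (σ i + ε * ‖I‖)) * ballVolume p k
    with hC_def
  have hofe0 : ENNReal.ofReal (ε ^ k) ≠ 0 := (ENNReal.ofReal_pos.mpr (pow_pos hε k)).ne'
  have ha0 : a ≠ 0 := mul_ne_zero hofe0 hVq_pos.ne'
  have hatop : a ≠ ∞ := ENNReal.mul_ne_top ENNReal.ofReal_ne_top hVq_ne_top
  -- the packing predicate
  set Q : ℕ → Prop := fun n => ∃ y : Fin n → PiLp q (fun _ : Fin k => ℝ),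
    (∀ j, y j ∈ S) ∧ Pairwise fun s t => 2 * ε < dist (y s) (y t) with hQ_def
  have hpack : ∀ n, Q n → (n : ℝ≥0∞) * a ≤ C := by
    intro n hn
    obtain ⟨y, hyS, hysep⟩ := hn
    exact packing_bound p q k σ hσ I hI hIpos ε hε n y (fun j => hyS j) hysep
  have hCa_top : C / a ≠ ∞ := by
    refine (ENNReal.div_lt_top ?_ ha0).ne
    exact ENNReal.mul_ne_top
      (ENNReal.mul_ne_top (ENNReal.pow_ne_top (by norm_num)) ENNReal.ofReal_ne_top) hVp_ne_top
  obtain ⟨B, hB⟩ := ENNReal.exists_nat_gt hCa_top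
  have hQle : ∀ n, Q n → n ≤ B := by
    intro n hn
    have h1 : (n : ℝ≥0∞) ≤ C / a :=
      (ENNReal.le_div_iff_mul_le (Or.inl ha0) (Or.inl hatop)).2 (hpack n hn)
    exact (Nat.cast_lt.mp (h1.trans_lt hB)).le
  have hQ1 : Q 1 := by
    refine ⟨fun _ => 0, fun j => ⟨0, by simp, fun i => by simp⟩, ?_⟩
    intro s t hst
    exact absurd (Subsingleton.elim s t) hst
  set N := Nat.findGreatest Q B with hN_def
  have hQN : Q N := Nat.findGreatest_spec (hQle 1 hQ1) hQ1
  have hN1 : 1 ≤ N := Nat.le_findGreatest (hQle 1 hQ1) hQ1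
  obtain ⟨y, hyS, hysep⟩ := hQN
  -- maximality gives a cover
  have hcover : S ⊆ ⋃ j, closedBall (y j) (2 * ε) := by
    intro s hs
    by_contra hns
    simp only [Set.mem_iUnion, mem_closedBall, not_exists, not_le] at hns
    have hQ' : Q (N + 1) := by
      refine ⟨Fin.cons s y, ?_, ?_⟩
      · intro j
        refine Fin.cases ?_ ?_ j
        · simpa using hs
        · intro j'; simpa using hyS j'
      · intro v w hvw
        induction v using Fin.cases with
        | zero =>
          induction w using Fin.cases with
          | zero => exact absurd rfl hvw
          | succ j => simpa [Fin.cons_zero, Fin.cons_succ] using hns j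
        | succ i =>
          induction w using Fin.cases with
          | zero => simpa [Fin.cons_zero, Fin.cons_succ, dist_comm] using hns i
          | succ j =>
            have hij : i ≠ j := fun h => hvw (by rw [h])
            simpa [Fin.cons_succ] using hysep hij
    exact absurd hQ' (Nat.findGreatest_is_greatest (Nat.lt_succ_self N) (hQle _ hQ'))
  have hcov_le : coveringNumber (2 * ε) S ≤ (N : ℝ≥0∞) :=
    sInf_le ⟨N, rfl, hN1, y, hcover⟩
  -- final algebra
  have hNpack : (N : ℝ≥0∞) * a ≤ C := hpack N ⟨y, hyS, hysep⟩
  have hprod : (∏ i : Fin k, (‖I‖ + σ i / ε)) = (∏ i : Fin k, (σ i + ε * ‖I‖)) / ε ^ k := by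
    have h1 : ∀ i : Fin k, ‖I‖ + σ i / ε = (σ i + ε * ‖I‖) / ε := fun i => by
      field_simp; ring
    rw [Finset.prod_congr rfl (fun i _ => h1 i), Finset.prod_div_distrib,
      Finset.prod_const, Finset.card_univ, Fintype.card_fin]
  have hofr : ENNReal.ofReal (∏ i : Fin k, (‖I‖ + σ i / ε))
      = ENNReal.ofReal (∏ i : Fin k, (σ i + ε * ‖I‖)) / ENNReal.ofReal (ε ^ k) := by
    rw [hprod, ENNReal.ofReal_div_of_pos (pow_pos hε k)]
  have hRa : 2 ^ k * (ballVolume p k / ballVolume q k) *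
      ENNReal.ofReal (∏ i : Fin k, (‖I‖ + σ i / ε)) * a = C := by
    rw [hofr, ha_def, hC_def, div_eq_mul_inv, div_eq_mul_inv]
    have h1 : 2 ^ k * (ballVolume p k * (ballVolume q k)⁻¹) *
        (ENNReal.ofReal (∏ i : Fin k, (σ i + ε * ‖I‖)) * (ENNReal.ofReal (ε ^ k))⁻¹) *
        (ENNReal.ofReal (ε ^ k) * ballVolume q k)
        = (2 ^ k * ENNReal.ofReal (∏ i : Fin k, (σ i + ε * ‖I‖)) * ballVolume p k) *
          ((ballVolume q k)⁻¹ * ballVolume q k) *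
          ((ENNReal.ofReal (ε ^ k))⁻¹ * ENNReal.ofReal (ε ^ k)) := by ring
    rw [h1, ENNReal.inv_mul_cancel hVq_pos.ne' hVq_ne_top,
      ENNReal.inv_mul_cancel hofe0 ENNReal.ofReal_ne_top, mul_one, mul_one]
  have hfin : (N : ℝ≥0∞) ≤ 2 ^ k * (ballVolume p k / ballVolume q k) *
      ENNReal.ofReal (∏ i : Fin k, (‖I‖ + σ i / ε)) := by
    rw [← ENNReal.mul_le_mul_iff_left ha0 hatop, hRa]
    exact hNpack
  exact hcov_le.trans hfin
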